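/- For n ≥ 1, the n-th partial derivative of {t+s brace s} with respect to t equals s^{n-1}(2s+n)C_n(st) + (t+s)sⁿC_{n+1}(st), where C_ν is the Bessel-Clifford function. -/

import Mathlib

/-- The Bessel–Clifford function of the first kind `C_ν(z) = ∑ z^m/(m!(m+ν)!)`. -/
noncomputable def besselClifford (ν : ℕ) (z : ℂ) : ℂ :=
  ∑' m : ℕ, z ^ m / ((Nat.factorial m : ℂ) * (Nat.factorial (m + ν) : ℂ))

/-- The continuous binomial coefficient `{t brace a}`. -/
noncomputable def contBinom (t a : ℂ) : ℂ :=
  2 * ∑' n : ℕ, a ^ n * (t - a) ^ n / ((Nat.factorial n : ℂ) ^ 2) +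
    t * ∑' n : ℕ, a ^ n * (t - a) ^ n / ((Nat.factorial (n + 1) : ℂ) * (Nat.factorial n : ℂ))

lemma hasDerivAt_bc (ν : ℕ) (s t : ℂ) :
    HasDerivAt (fun t' : ℂ => besselClifford ν (s * t'))
      (s * besselClifford (ν + 1) (s * t)) t := by
  set R : ℝ := max (‖t‖ + 1) 1 with hRdef
  have hR1 : (1:ℝ) ≤ R := le_max_right _ _
  have htR : ‖t‖ < R := lt_of_lt_of_le (by linarith) (le_max_left _ _)
  set c : ℕ → ℂ := fun m => s ^ m / ((m.factorial : ℂ) * ((m + ν).factorial : ℂ)) with hc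
  set u : ℕ → ℝ := fun m => ‖s‖ * (‖s‖ * R) ^ (m - 1) / ((m - 1).factorial : ℝ) with hu
  have husum : Summable u := by
    rw [← summable_nat_add_iff 1]
    have hfuneq : (fun n : ℕ => u (n+1)) = fun n : ℕ => ‖s‖ * ((‖s‖*R)^n / (n.factorial : ℝ)) := by
      funext n; simp [hu, mul_div_assoc]
    rw [hfuneq]
    exact (Real.summable_pow_div_factorial (‖s‖ * R)).mul_left ‖s‖
  have hbound : ∀ (m : ℕ) (x : ℂ), x ∈ Metric.ball (0:ℂ) R →
      ‖c m * ((m:ℂ) * x ^ (m - 1))‖ ≤ u m := by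
    intro m x hx
    rw [mem_ball_zero_iff] at hx
    match m with
    | 0 => simp [hu]
    | k + 1 =>
      have hxR : ‖x‖ ≤ R := hx.le
      have hnorm : ‖c (k+1) * (((k+1 : ℕ):ℂ) * x ^ (k+1-1))‖
          = ‖s‖ ^ (k+1) / (((k+1).factorial : ℝ) * ((k+1+ν).factorial : ℝ))
            * ((((k+1):ℕ):ℝ) * ‖x‖ ^ k) := by
        simp only [hc, Nat.add_sub_cancel, norm_mul, norm_div, norm_pow, RCLike.norm_natCast]
      rw [hnorm]
      calc ‖s‖ ^ (k+1) / (((k+1).factorial : ℝ) * ((k+1+ν).factorial : ℝ))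
            * ((((k+1):ℕ):ℝ) * ‖x‖ ^ k)
          ≤ ‖s‖ ^ (k+1) / (((k+1).factorial : ℝ) * 1) * ((((k+1):ℕ):ℝ) * R ^ k) := by
            gcongr
            exact_mod_cast Nat.one_le_iff_ne_zero.mpr (Nat.factorial_ne_zero _)
        _ = u (k+1) := by
            simp only [hu, Nat.add_sub_cancel, mul_pow]
            rw [Nat.factorial_succ]
            have h1 : ((k.factorial : ℝ)) ≠ 0 := by positivity
            push_cast
            field_simp
            ring
  have hderiv : ∀ (m : ℕ) (x : ℂ), x ∈ Metric.ball (0:ℂ) R →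
      HasDerivAt (fun y : ℂ => c m * y ^ m) (c m * ((m:ℂ) * x ^ (m - 1))) x := by
    intro m x _
    exact (hasDerivAt_pow m x).const_mul (c m)
  have hsum0 : Summable (fun m => c m * (0:ℂ) ^ m) := by
    apply summable_of_ne_finset_zero (s := {0})
    intro m hm
    simp at hm
    simp [zero_pow hm]
  have h0mem : (0:ℂ) ∈ Metric.ball (0:ℂ) R := by
    simp only [mem_ball_zero_iff, norm_zero]; linarith
  have htmem : t ∈ Metric.ball (0:ℂ) R := by simpa [mem_ball_zero_iff] using htR
  have H := hasDerivAt_tsum_of_isPreconnected husum Metric.isOpen_ball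
    (convex_ball (0:ℂ) R).isPreconnected hderiv hbound h0mem hsum0 htmem
  have hfun : (fun t' : ℂ => besselClifford ν (s * t')) = fun z : ℂ => ∑' m, c m * z ^ m := by
    funext z
    rw [besselClifford]
    exact tsum_congr fun m => by rw [hc]; simp only; rw [mul_pow]; ring
  rw [hfun]
  refine HasDerivAt.congr_deriv H (Eq.symm ?_)
  have hsummd : Summable (fun m => c m * ((m:ℂ) * t ^ (m - 1))) :=
    Summable.of_norm_bounded husum fun m => hbound m t htmem
  rw [Summable.tsum_eq_zero_add hsummd]
  simp only [Nat.cast_zero, zero_mul, mul_zero, zero_add]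
  rw [besselClifford, ← tsum_mul_left]
  apply tsum_congr
  intro k
  rw [hc]
  simp only [Nat.add_sub_cancel]
  rw [show k + (ν + 1) = k + 1 + ν by omega, mul_pow, Nat.factorial_succ]
  have h1 : ((k.factorial : ℂ)) ≠ 0 := by exact_mod_cast Nat.factorial_ne_zero k
  have h2 : (((k+1+ν).factorial : ℂ)) ≠ 0 := by exact_mod_cast Nat.factorial_ne_zero _
  have h3 : ((k:ℂ)+1) ≠ 0 := by exact_mod_cast Nat.succ_ne_zero k
  push_cast
  field_simp
  ring

lemma contBinom_eq (s t : ℂ) :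
    contBinom (t + s) s = 2 * besselClifford 0 (s * t) + (t + s) * besselClifford 1 (s * t) := by
  rw [contBinom, besselClifford, besselClifford]
  congr 1
  · congr 1
    refine tsum_congr fun n => ?_
    rw [add_sub_cancel_right, mul_pow, add_zero]
    ring
  · congr 1
    refine tsum_congr fun n => ?_
    rw [add_sub_cancel_right, mul_pow]
    ring

lemma main_aux (s : ℂ) (m : ℕ) : ∀ t : ℂ,
    iteratedDeriv (m + 1) (fun t' : ℂ => contBinom (t' + s) s) t =
      s ^ m * (2 * s + ((m : ℂ) + 1)) * besselClifford (m + 1) (s * t) +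
        (t + s) * (s ^ (m + 1) * besselClifford (m + 2) (s * t)) := by
  induction m with
  | zero =>
    intro t
    rw [iteratedDeriv_one]
    have hfe : (fun t' : ℂ => contBinom (t' + s) s) =
        fun t' : ℂ => 2 * besselClifford 0 (s * t') +
          (t' + s) * besselClifford 1 (s * t') := by
      funext t'; exact contBinom_eq s t'
    rw [hfe]
    have H : HasDerivAt (fun t' : ℂ => 2 * besselClifford 0 (s * t') +
          (t' + s) * besselClifford 1 (s * t'))
        (2 * (s * besselClifford 1 (s * t)) +
          (1 * besselClifford 1 (s * t) + (t + s) * (s * besselClifford 2 (s * t)))) t :=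
      ((hasDerivAt_bc 0 s t).const_mul 2).add
        (((hasDerivAt_id t).add_const s).mul (hasDerivAt_bc 1 s t))
    rw [H.deriv]
    push_cast
    ring
  | succ m ih =>
    intro t
    rw [iteratedDeriv_succ]
    have hfe : iteratedDeriv (m + 1) (fun t' : ℂ => contBinom (t' + s) s) =
        fun t' : ℂ => s ^ m * (2 * s + ((m : ℂ) + 1)) * besselClifford (m + 1) (s * t') +
          (t' + s) * (s ^ (m + 1) * besselClifford (m + 2) (s * t')) := by
      funext t'; exact ih t'
    rw [hfe]
    have H : HasDerivAt (fun t' : ℂ => s ^ m * (2 * s + ((m : ℂ) + 1)) *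
          besselClifford (m + 1) (s * t') +
          (t' + s) * (s ^ (m + 1) * besselClifford (m + 2) (s * t')))
        (s ^ m * (2 * s + ((m : ℂ) + 1)) * (s * besselClifford (m + 2) (s * t)) +
          (1 * (s ^ (m + 1) * besselClifford (m + 2) (s * t)) +
            (t + s) * (s ^ (m + 1) * (s * besselClifford (m + 3) (s * t))))) t :=
      (((hasDerivAt_bc (m + 1) s t).const_mul (s ^ m * (2 * s + ((m : ℂ) + 1)))).add
        (((hasDerivAt_id t).add_const s).mul ((hasDerivAt_bc (m + 2) s t).const_mul (s ^ (m + 1)))))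
    rw [H.deriv]
    push_cast
    ring

theorem contBinom_iteratedDeriv (n : ℕ) (hn : 1 ≤ n) (s t : ℂ) :
    iteratedDeriv n (fun t' : ℂ => contBinom (t' + s) s) t =
      s ^ (n - 1) * (2 * s + (n : ℂ)) * besselClifford n (s * t) +
        (t + s) * s ^ n * besselClifford (n + 1) (s * t) := by
  obtain ⟨m, rfl⟩ : ∃ m, n = m + 1 := ⟨n - 1, by omega⟩
  have := main_aux s m t
  rw [this]
  simp only [Nat.add_sub_cancel]
  push_cast
  ring
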